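/- For every δ ∈ (0, 1/2) and every R1 ∈ (0, 1), one has 1 − h2(δ ⋆ h2⁻¹(1 − R1)) < min{ R1, 1 − h2(δ) }. (The capacity 1 − h2(δ ⋆ h2⁻¹(1 − R1)) of the binary symmetric multihop relay channel with uniform state is strictly smaller than the cut-set bound min{R1, 1 − h2(δ)}.) -/

import Mathlib

open MeasureTheory

/-- Binary entropy function (base 2), with the convention `0 * log₂ 0 = 0`
(automatic since `Real.logb 2 0 = 0`). -/
noncomputable def h2 (p : ℝ) : ℝ :=
  -(p * Real.logb 2 p) - (1 - p) * Real.logb 2 (1 - p)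

/-- Inverse of the binary entropy function: for `q ≥ 0`, the unique `r ∈ [0, 1/2]`
with `h2 r = q` (realized as the infimum of the solution set); `0` for `q < 0`. -/
noncomputable def h2inv (q : ℝ) : ℝ :=
  if q < 0 then 0 else sInf {r : ℝ | 0 ≤ r ∧ r ≤ 1 / 2 ∧ h2 r = q}

/-- Binary convolution `a ⋆ b = a(1-b) + (1-a)b`. -/
def bconv (a b : ℝ) : ℝ := a * (1 - b) + (1 - a) * b

lemma h2_eq (p : ℝ) : h2 p = Real.binEntropy p / Real.log 2 := by
  have h2pos : (0:ℝ) < Real.log 2 := Real.log_pos (by norm_num)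
  rw [Real.binEntropy]
  rcases eq_or_ne p 0 with rfl | hp0
  · simp [h2, Real.logb]
  rcases eq_or_ne p 1 with rfl | hp1
  · simp [h2, Real.logb]
  have h1p : 1 - p ≠ 0 := by intro h; apply hp1; linarith
  rw [Real.log_inv, Real.log_inv]
  unfold h2 Real.logb
  field_simp [h2, Real.logb]
  ring

lemma h2_strictMonoOn : StrictMonoOn h2 (Set.Icc 0 (1/2)) := by
  have h2pos : (0:ℝ) < Real.log 2 := Real.log_pos (by norm_num)
  intro a ha b hb hab
  rw [h2_eq, h2_eq]
  have : Real.binEntropy a < Real.binEntropy b := by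
    apply Real.binEntropy_strictMonoOn _ _ hab
    · simpa [one_div] using ha
    · simpa [one_div] using hb
  exact div_lt_div_of_pos_right this h2pos

lemma h2inv_spec {q : ℝ} (hq0 : 0 < q) (hq1 : q < 1) :
    0 < h2inv q ∧ h2inv q < 1/2 ∧ h2 (h2inv q) = q := by
  have h2pos : (0:ℝ) < Real.log 2 := Real.log_pos (by norm_num)
  have h2zero : h2 0 = 0 := by simp [h2]
  have h2half : h2 (1/2) = 1 := by
    rw [h2_eq]
    rw [show (1:ℝ)/2 = 2⁻¹ by norm_num, Real.binEntropy_two_inv]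
    field_simp
  -- existence via IVT
  have hcont : ContinuousOn h2 (Set.Icc 0 (1/2)) := by
    have : Continuous h2 := by
      have := Real.binEntropy_continuous
      have : Continuous (fun p => Real.binEntropy p / Real.log 2) := this.div_const _
      simpa [funext h2_eq] using this
    exact this.continuousOn
  obtain ⟨r0, hr0mem, hr0⟩ := intermediate_value_Icc (by norm_num : (0:ℝ) ≤ 1/2) hcont
    (by rw [h2zero, h2half]; exact ⟨hq0.le, hq1.le⟩)
  have hset : {r : ℝ | 0 ≤ r ∧ r ≤ 1 / 2 ∧ h2 r = q} = {r0} := by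
    ext x
    simp only [Set.mem_setOf_eq, Set.mem_singleton_iff]
    constructor
    · rintro ⟨hx0, hx1, hx⟩
      by_contra hne
      rcases lt_or_gt_of_ne hne with h | h
      · have := h2_strictMonoOn ⟨hx0, hx1⟩ hr0mem h
        rw [hx, hr0] at this; exact lt_irrefl _ this
      · have := h2_strictMonoOn hr0mem ⟨hx0, hx1⟩ h
        rw [hx, hr0] at this; exact lt_irrefl _ this
    · rintro rfl; exact ⟨hr0mem.1, hr0mem.2, hr0⟩
  have hinv : h2inv q = r0 := by
    rw [h2inv, if_neg (not_lt.mpr hq0.le), hset, csInf_singleton]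
  rw [hinv]
  refine ⟨?_, ?_, hr0⟩
  · rcases hr0mem.1.lt_or_eq with h | h
    · exact h
    · exfalso; rw [← h, h2zero] at hr0; linarith
  · rcases hr0mem.2.lt_or_eq with h | h
    · exact h
    · exfalso; rw [h, h2half] at hr0; linarith

theorem stmt9 (δ R1 : ℝ) (hδ : δ ∈ Set.Ioo (0 : ℝ) (1 / 2))
    (hR1 : R1 ∈ Set.Ioo (0 : ℝ) 1) :
    1 - h2 (bconv δ (h2inv (1 - R1))) < min R1 (1 - h2 δ) := by
  obtain ⟨hδ0, hδ1⟩ := hδ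
  obtain ⟨hR0, hR1'⟩ := hR1
  obtain ⟨hr0, hr1, hrval⟩ := h2inv_spec (by linarith : (0:ℝ) < 1 - R1) (by linarith)
  set r := h2inv (1 - R1) with hr
  have hconv : bconv δ r = δ + r - 2*δ*r := by unfold bconv; ring
  have h1 : r < bconv δ r := by rw [hconv]; nlinarith
  have h2' : δ < bconv δ r := by rw [hconv]; nlinarith
  have h3 : bconv δ r < 1/2 := by rw [hconv]; nlinarith
  have hmem : bconv δ r ∈ Set.Icc (0:ℝ) (1/2) := ⟨by linarith, h3.le⟩
  have hgt1 : h2 r < h2 (bconv δ r) :=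
    h2_strictMonoOn ⟨hr0.le, hr1.le⟩ hmem h1
  have hgt2 : h2 δ < h2 (bconv δ r) :=
    h2_strictMonoOn ⟨hδ0.le, hδ1.le⟩ hmem h2'
  rw [hrval] at hgt1
  exact lt_min (by linarith) (by linarith)
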